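/- Let f ∈ ℍ[z], let α be non-real, and suppose f^{eℓ}(α) ≠ 0 and f has a left zero in the conjugacy class [α]. Then f^{eℓ}(\bar{α}) ≠ f^{eℓ}(α) and f^{eℓ}(\bar{α}) ≠ −f^{eℓ}(α), and the unique left zero of f in [α] equals γ_ℓ = (\bar{α} f^{eℓ}(α) + α f^{eℓ}(\bar{α}))·(f^{eℓ}(α) + f^{eℓ}(\bar{α}))⁻¹. -/

import Mathlib

open Polynomial

/-- Left evaluation of a quaternion polynomial: `f^{eℓ}(α) = Σ α^j f_j`. -/
noncomputable def levalQ (α : Quaternion ℝ) (f : Polynomial (Quaternion ℝ)) : Quaternion ℝ :=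
  f.sum fun j a => α ^ j * a

open Quaternion

noncomputable def cQ (t n : ℝ) : ℕ → ℝ × ℝ
  | 0 => (0, 1)
  | j+1 => (t * (cQ t n j).1 + (cQ t n j).2, -n * (cQ t n j).1)

lemma cQ_pow (t n : ℝ) (γ : Quaternion ℝ)
    (hγ : γ * γ = (t : Quaternion ℝ) * γ - (n : Quaternion ℝ)) (j : ℕ) :
    γ ^ j = ((cQ t n j).1 : Quaternion ℝ) * γ + ((cQ t n j).2 : Quaternion ℝ) := by
  induction j with
  | zero => simp [cQ]
  | succ j ih =>
    calc γ ^ (j+1) = (((cQ t n j).1 : Quaternion ℝ) * γ + ((cQ t n j).2 : Quaternion ℝ)) * γ := by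
          rw [pow_succ, ih]
      _ = ((cQ t n j).1 : Quaternion ℝ) * (γ * γ) + ((cQ t n j).2 : Quaternion ℝ) * γ := by
          rw [add_mul, mul_assoc]
      _ = ((cQ t n j).1 : Quaternion ℝ) * ((t : Quaternion ℝ) * γ - (n : Quaternion ℝ))
            + ((cQ t n j).2 : Quaternion ℝ) * γ := by rw [hγ]
      _ = ((cQ t n (j+1)).1 : Quaternion ℝ) * γ + ((cQ t n (j+1)).2 : Quaternion ℝ) := by
          simp only [cQ]
          push_cast
          have h3 : ((cQ t n j).1 : Quaternion ℝ) * (t : Quaternion ℝ)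
              = (t : Quaternion ℝ) * ((cQ t n j).1 : Quaternion ℝ) := by norm_cast; ring
          have h4 : ((cQ t n j).1 : Quaternion ℝ) * (n : Quaternion ℝ)
              = (n : Quaternion ℝ) * ((cQ t n j).1 : Quaternion ℝ) := by norm_cast; ring
          rw [mul_sub, ← mul_assoc, h3, h4, add_mul, neg_mul]
          abel

lemma levalQ_eq (t n : ℝ) (f : Polynomial (Quaternion ℝ)) (γ : Quaternion ℝ)
    (hγ : γ * γ = (t : Quaternion ℝ) * γ - (n : Quaternion ℝ)) :
    levalQ γ f = γ * (f.sum fun j r => ((cQ t n j).1 : Quaternion ℝ) * r)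
      + (f.sum fun j r => ((cQ t n j).2 : Quaternion ℝ) * r) := by
  rw [levalQ, Polynomial.sum_def, Polynomial.sum_def, Polynomial.sum_def, Finset.mul_sum,
    ← Finset.sum_add_distrib]
  refine Finset.sum_congr rfl fun j _ => ?_
  rw [cQ_pow t n γ hγ j, add_mul, mul_assoc]
  rw [show γ * (((cQ t n j).1 : Quaternion ℝ) * f.coeff j)
      = ((cQ t n j).1 : Quaternion ℝ) * (γ * f.coeff j) from by
    rw [← mul_assoc, ← mul_assoc, coe_commutes]]

/-- Formula for the unique left zero of `f` in the conjugacy class `[α]`. -/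
theorem stmt7 (α : Quaternion ℝ) (hα : α.im ≠ 0) (f : Polynomial (Quaternion ℝ))
    (hfα : levalQ α f ≠ 0)
    (hzero : ∃ γ : Quaternion ℝ, (∃ h : Quaternion ℝ, h ≠ 0 ∧ γ = h⁻¹ * α * h) ∧
      levalQ γ f = 0) :
    levalQ (star α) f ≠ levalQ α f ∧ levalQ (star α) f ≠ -levalQ α f ∧
    (∃ h : Quaternion ℝ, h ≠ 0 ∧
        (star α * levalQ α f + α * levalQ (star α) f) *
          (levalQ α f + levalQ (star α) f)⁻¹ = h⁻¹ * α * h) ∧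
    levalQ ((star α * levalQ α f + α * levalQ (star α) f) *
      (levalQ α f + levalQ (star α) f)⁻¹) f = 0 ∧
    ∀ γ : Quaternion ℝ, (∃ h : Quaternion ℝ, h ≠ 0 ∧ γ = h⁻¹ * α * h) → levalQ γ f = 0 →
      γ = (star α * levalQ α f + α * levalQ (star α) f) *
        (levalQ α f + levalQ (star α) f)⁻¹ := by
  obtain ⟨γ, ⟨h, hh, hγeq⟩, hγ0⟩ := hzero
  set t : ℝ := 2 * α.re with ht
  set n : ℝ := normSq α with hn
  -- the quadratic equation satisfied by the conjugacy class
  have hquadα : α * α = (t : Quaternion ℝ) * α - (n : Quaternion ℝ) := by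
    calc α * α = (α + star α) * α - star α * α := by noncomm_ring
      _ = (t : Quaternion ℝ) * α - (n : Quaternion ℝ) := by
          rw [self_add_star', star_mul_self]
  have hquadsα : star α * star α = (t : Quaternion ℝ) * star α - (n : Quaternion ℝ) := by
    calc star α * star α = (star α + α) * star α - α * star α := by noncomm_ring
      _ = (t : Quaternion ℝ) * star α - (n : Quaternion ℝ) := by
          rw [star_add_self', self_mul_star]
  have hconj : ∀ k : Quaternion ℝ, k ≠ 0 →
      (k⁻¹ * α * k) * (k⁻¹ * α * k) = (t : Quaternion ℝ) * (k⁻¹ * α * k) - (n : Quaternion ℝ) := by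
    intro k hk
    have hk1 : k * k⁻¹ = 1 := mul_inv_cancel₀ hk
    have hk2 : k⁻¹ * k = 1 := inv_mul_cancel₀ hk
    have e0 : (k⁻¹ * α * k) * (k⁻¹ * α * k) = k⁻¹ * (α * α) * k := by
      calc (k⁻¹ * α * k) * (k⁻¹ * α * k) = k⁻¹ * α * (k * k⁻¹) * α * k := by
            simp only [mul_assoc]
        _ = k⁻¹ * (α * α) * k := by rw [hk1, mul_one]; simp only [mul_assoc]
    have p2 : k⁻¹ * (n : Quaternion ℝ) * k = (n : Quaternion ℝ) := by
      rw [← coe_commutes, mul_assoc, hk2, mul_one]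
    have p1 : k⁻¹ * ((t : Quaternion ℝ) * α) * k = (t : Quaternion ℝ) * (k⁻¹ * α * k) := by
      rw [← mul_assoc, ← coe_commutes]; simp only [mul_assoc]
    rw [e0, hquadα, mul_sub, sub_mul, p1, p2]
  have hquadγ : γ * γ = (t : Quaternion ℝ) * γ - (n : Quaternion ℝ) := by
    rw [hγeq]; exact hconj h hh
  set A : Quaternion ℝ := f.sum fun j r => ((cQ t n j).1 : Quaternion ℝ) * r with hAdef
  set B : Quaternion ℝ := f.sum fun j r => ((cQ t n j).2 : Quaternion ℝ) * r with hBdef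
  have eα : levalQ α f = α * A + B := levalQ_eq t n f α hquadα
  have esα : levalQ (star α) f = star α * A + B := levalQ_eq t n f (star α) hquadsα
  have eγ : levalQ γ f = γ * A + B := levalQ_eq t n f γ hquadγ
  have hA0 : A ≠ 0 := by
    intro h0
    have hB0 : B = 0 := by
      have := hγ0; rw [eγ, h0, mul_zero, zero_add] at this; exact this
    exact hfα (by rw [eα, h0, mul_zero, zero_add, hB0])
  have hγA : γ * A = -B := by
    have := hγ0; rw [eγ] at this
    exact eq_neg_of_add_eq_zero_left this
  have hγB : γ * B = (t : Quaternion ℝ) * B + (n : Quaternion ℝ) * A := by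
    have h1 : (γ * γ) * A = ((t : Quaternion ℝ) * γ - (n : Quaternion ℝ)) * A := by rw [hquadγ]
    rw [sub_mul, mul_assoc, mul_assoc, hγA, mul_neg, mul_neg] at h1
    have h2 : -(γ * B) = -((t : Quaternion ℝ) * B + (n : Quaternion ℝ) * A) := by rw [h1]; abel
    exact neg_injective h2
  have hsum : levalQ α f + levalQ (star α) f = (t : Quaternion ℝ) * A + (B + B) := by
    rw [eα, esα]
    calc α * A + B + (star α * A + B) = (α + star α) * A + (B + B) := by noncomm_ring
      _ = (t : Quaternion ℝ) * A + (B + B) := by rw [self_add_star']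
  have hsum_ne : levalQ α f + levalQ (star α) f ≠ 0 := by
    intro h0
    rw [hsum] at h0
    have htA : (t : Quaternion ℝ) * A = -(B + B) := eq_neg_of_add_eq_zero_left h0
    have h2γ : (2 * γ - (t : Quaternion ℝ)) * A = 0 := by
      rw [sub_mul, htA, mul_assoc, hγA, mul_neg, sub_neg_eq_add, two_mul]
      abel
    have h2t : 2 * γ - (t : Quaternion ℝ) = 0 := by
      rcases mul_eq_zero.mp h2γ with h' | h'
      · exact h'
      · exact absurd h' hA0
    have hγr : γ = ((t / 2 : ℝ) : Quaternion ℝ) := by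
      have h2 : (2 : Quaternion ℝ) * γ = (t : Quaternion ℝ) := by
        have := sub_eq_zero.mp h2t; exact this
      have h22 : ((2 : ℝ) : Quaternion ℝ) = (2 : Quaternion ℝ) := by norm_cast
      have h2' : (2 : Quaternion ℝ) * ((t / 2 : ℝ) : Quaternion ℝ) = (t : Quaternion ℝ) := by
        have hr : (2:ℝ) * (t/2) = t := by ring
        rw [← h22, ← Quaternion.coe_mul, hr]
      have h2ne : (2 : Quaternion ℝ) ≠ 0 := by
        rw [← h22]; intro hc
        have : (2:ℝ) = 0 := Quaternion.coe_injective (by rw [hc]; norm_cast)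
        norm_num at this
      exact mul_left_cancel₀ h2ne (h2.trans h2'.symm)
    have hαr : α = ((t / 2 : ℝ) : Quaternion ℝ) := by
      have e1 : h * (h⁻¹ * α * h) * h⁻¹ = α := by
        calc h * (h⁻¹ * α * h) * h⁻¹ = (h * h⁻¹) * α * (h * h⁻¹) := by simp only [mul_assoc]
          _ = α := by rw [mul_inv_cancel₀ hh, one_mul, mul_one]
      have e2 : h * ((t / 2 : ℝ) : Quaternion ℝ) * h⁻¹ = ((t / 2 : ℝ) : Quaternion ℝ) := by
        rw [← coe_commutes, mul_assoc, mul_inv_cancel₀ hh, mul_one]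
      rw [← e1, ← hγeq, hγr, e2]
    exact hα (by rw [hαr, im_coe])
  have hne2 : levalQ (star α) f ≠ -levalQ α f := by
    intro h0
    exact hsum_ne (by rw [h0, add_neg_cancel])
  have hne1 : levalQ (star α) f ≠ levalQ α f := by
    intro h0
    have hd : (star α - α) * A = 0 := by
      have : levalQ (star α) f - levalQ α f = (star α - α) * A := by
        rw [eα, esα]; noncomm_ring
      rw [← this, h0, sub_self]
    have hsαne : star α - α ≠ 0 := by
      intro hs
      have hse : star α = α := sub_eq_zero.mp hs
      have him : α.im = -α.im := by
        conv_lhs => rw [← hse]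
        exact im_star _
      have h2im : (2 : ℝ) • α.im = 0 := by
        rw [two_smul]; nth_rewrite 1 [him]; exact neg_add_cancel _
      exact hα ((smul_eq_zero.mp h2im).resolve_left two_ne_zero)
    rcases mul_eq_zero.mp hd with h' | h'
    · exact hsαne h'
    · exact hA0 h'
  have hform : (star α * levalQ α f + α * levalQ (star α) f) *
      (levalQ α f + levalQ (star α) f)⁻¹ = γ := by
    rw [mul_inv_eq_iff_eq_mul₀ hsum_ne]
    have e1 : star α * levalQ α f + α * levalQ (star α) f
        = (n : Quaternion ℝ) * A + (n : Quaternion ℝ) * A + (t : Quaternion ℝ) * B := by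
      rw [eα, esα, mul_add, mul_add, ← mul_assoc, ← mul_assoc, star_mul_self, self_mul_star]
      have hB' : star α * B + α * B = (t : Quaternion ℝ) * B := by
        rw [← add_mul, star_add_self']
      rw [← hB']; abel
    have e2 : γ * (levalQ α f + levalQ (star α) f)
        = (n : Quaternion ℝ) * A + (n : Quaternion ℝ) * A + (t : Quaternion ℝ) * B := by
      rw [hsum, mul_add, ← mul_assoc, ← coe_commutes, mul_assoc, hγA, mul_add, hγB, mul_neg]
      abel
    rw [e1, e2]
  refine ⟨hne1, hne2, ⟨h, hh, by rw [hform]; exact hγeq⟩, by rw [hform]; exact hγ0, ?_⟩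
  rintro γ' ⟨h', hh', hγ'eq⟩ hγ'0
  have hquadγ' : γ' * γ' = (t : Quaternion ℝ) * γ' - (n : Quaternion ℝ) := by
    rw [hγ'eq]; exact hconj h' hh'
  have eγ' : levalQ γ' f = γ' * A + B := levalQ_eq t n f γ' hquadγ'
  have hγ'A : γ' * A = -B := by
    have := hγ'0; rw [eγ'] at this
    exact eq_neg_of_add_eq_zero_left this
  rw [hform]
  exact mul_right_cancel₀ hA0 (hγ'A.trans hγA.symm)
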